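/- Let G be a connected graph, H a graph, and u a vertex of G. For any two distinct vertices v1, v2 of H, the set of vertices of the corona product G⊙H resolving (u,v1) and (u,v2) equals {(u,v) : v ∈ S_H{v1,v2}}; that is, R_{G⊙H}{(u,v1),(u,v2)} = ⋃_{v ∈ S_H{v1,v2}} {(u,v)}. -/

import Mathlib

open Finset

variable {α β V : Type*}

/-- The corona product `G ⊙ H`. -/
def SimpleGraph.corona (G : SimpleGraph α) (H : SimpleGraph β) :
    SimpleGraph (α ⊕ α × β) where
  Adj x y :=
    match x, y with
    | Sum.inl u1, Sum.inl u2 => G.Adj u1 u2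
    | Sum.inl u1, Sum.inr p => u1 = p.1
    | Sum.inr p, Sum.inl u2 => p.1 = u2
    | Sum.inr p, Sum.inr q => p.1 = q.1 ∧ H.Adj p.2 q.2
  symm := by
    constructor
    rintro (u1 | p) (u2 | q) h
    · exact h.symm
    · exact h.symm
    · exact h.symm
    · exact ⟨h.1.symm, h.2.symm⟩
  loopless := by
    constructor
    rintro (u | p) h
    · exact G.loopless.irrefl u h
    · exact H.loopless.irrefl p.2 h.2

/-- The lexicographic product `G[H]`. -/
def SimpleGraph.lexProd (G : SimpleGraph α) (H : SimpleGraph β) :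
    SimpleGraph (α × β) where
  Adj x y := G.Adj x.1 y.1 ∨ (x.1 = y.1 ∧ H.Adj x.2 y.2)
  symm := by
    constructor
    rintro x y (h | ⟨h1, h2⟩)
    · exact Or.inl h.symm
    · exact Or.inr ⟨h1.symm, h2.symm⟩
  loopless := by
    constructor
    rintro x (h | ⟨h1, h2⟩)
    · exact G.loopless.irrefl _ h
    · exact H.loopless.irrefl _ h2

open scoped Classical in
/-- `R_F{x,y}`: the set of vertices resolving `x` and `y` (distance measured by `edist`,
which is `∞` between vertices in different components). -/
noncomputable def resolvingFinset (F : SimpleGraph V) [Fintype V] (x y : V) : Finset V :=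
  univ.filter fun z => F.edist x z ≠ F.edist y z

/-- `S_H{v₁,v₂} = {v₁,v₂} ∪ (N_H(v₁) Δ N_H(v₂))`. -/
def locatingFinset (H : SimpleGraph V) [Fintype V] [DecidableEq V]
    [DecidableRel H.Adj] (v1 v2 : V) : Finset V :=
  {v1, v2} ∪ symmDiff (H.neighborFinset v1) (H.neighborFinset v2)

/-- A resolving function of `F`. -/
def IsResolvingFn (F : SimpleGraph V) [Fintype V] (g : V → ℝ) : Prop :=
  (∀ v, g v ∈ Set.Icc (0 : ℝ) 1) ∧
    ∀ x y : V, x ≠ y → 1 ≤ ∑ z ∈ resolvingFinset F x y, g z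

/-- The fractional metric dimension `dim_f(F)`. -/
noncomputable def fracMetricDim (F : SimpleGraph V) [Fintype V] : ℝ :=
  sInf {w | ∃ g, IsResolvingFn F g ∧ w = ∑ v, g v}

/-- A locating function of `H`. -/
def IsLocatingFn (H : SimpleGraph V) [Fintype V] [DecidableEq V]
    [DecidableRel H.Adj] (g : V → ℝ) : Prop :=
  (∀ v, g v ∈ Set.Icc (0 : ℝ) 1) ∧
    ∀ v1 v2 : V, v1 ≠ v2 → 1 ≤ ∑ v ∈ locatingFinset H v1 v2, g v

/-- `l_f(H)`: the minimum weight of a locating function. -/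
noncomputable def fracLoc (H : SimpleGraph V) [Fintype V] [DecidableEq V]
    [DecidableRel H.Adj] : ℝ :=
  sInf {w | ∃ g, IsLocatingFn H g ∧ w = ∑ v, g v}

open scoped Classical in
/-- `λ(H)`: maximum number of common neighbours of two adjacent vertices, `-1` if no edges. -/
noncomputable def lambdaMax (H : SimpleGraph V) [Fintype V] : ℤ :=
  if hne : (univ.filter fun p : V × V => H.Adj p.1 p.2).Nonempty then
    (univ.filter fun p : V × V => H.Adj p.1 p.2).sup' hne fun p =>
      ((univ.filter fun w => H.Adj p.1 w ∧ H.Adj p.2 w).card : ℤ)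
  else -1

open scoped Classical in
/-- `μ(H)`: maximum number of common neighbours of two distinct nonadjacent vertices,
`0` for complete graphs. -/
noncomputable def muMax (H : SimpleGraph V) [Fintype V] : ℤ :=
  if hne : (univ.filter fun p : V × V => p.1 ≠ p.2 ∧ ¬H.Adj p.1 p.2).Nonempty then
    (univ.filter fun p : V × V => p.1 ≠ p.2 ∧ ¬H.Adj p.1 p.2).sup' hne fun p =>
      ((univ.filter fun w => H.Adj p.1 w ∧ H.Adj p.2 w).card : ℤ)
  else 0

/-- A graph is vertex-transitive if its automorphism group is transitive on vertices. -/
def IsVertexTransitive (H : SimpleGraph V) : Prop :=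
  ∀ u v : V, ∃ φ : H ≃g H, φ u = v

/-- Two distinct vertices are twins if they have the same closed or the same open
neighbourhood. -/
def SimpleGraph.Twins (G : SimpleGraph V) (u1 u2 : V) : Prop :=
  u1 ≠ u2 ∧ (insert u1 (G.neighborSet u1) = insert u2 (G.neighborSet u2) ∨
    G.neighborSet u1 = G.neighborSet u2)

open scoped Classical in
/-- `m₁(G)`: number of vertices in twin-equivalence classes of type 1 (singletons). -/
noncomputable def m1 (G : SimpleGraph V) [Fintype V] : ℕ :=
  (univ.filter fun u => ∀ w, ¬G.Twins u w).card

open scoped Classical in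
/-- `m₂(G)`: number of vertices in twin-equivalence classes of type 2 (cliques). -/
noncomputable def m2 (G : SimpleGraph V) [Fintype V] : ℕ :=
  (univ.filter fun u => ∃ w, G.Twins u w ∧ G.Adj u w).card

open scoped Classical in
/-- `m₃(G)`: number of vertices in twin-equivalence classes of type 3 (independent sets). -/
noncomputable def m3 (G : SimpleGraph V) [Fintype V] : ℕ :=
  (univ.filter fun u => ∃ w, G.Twins u w ∧ ¬G.Adj u w).card

section AuxCorona

variable {α β : Type*} (G : SimpleGraph α) (H : SimpleGraph β)

/-- Any vertex `(u,v)` of the `u`-th copy of `H` is at distance `1 + d(u, z)` from any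
vertex `z` outside this copy. -/
lemma aux_edist_copy (u : α) (z : α ⊕ α × β) (hz : ∀ v' : β, z ≠ Sum.inr (u, v')) (v : β) :
    (G.corona H).edist (Sum.inr (u, v)) z = 1 + (G.corona H).edist (Sum.inl u) z := by
  have hadj : (G.corona H).Adj (Sum.inr (u, v)) (Sum.inl u) := rfl
  refine le_antisymm ?_ ?_
  · calc (G.corona H).edist (Sum.inr (u, v)) z
        ≤ (G.corona H).edist (Sum.inr (u, v)) (Sum.inl u) +
            (G.corona H).edist (Sum.inl u) z := SimpleGraph.edist_triangle
      _ ≤ 1 + (G.corona H).edist (Sum.inl u) z := by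
          gcongr
          exact le_of_eq (SimpleGraph.edist_eq_one_iff_adj.mpr hadj)
  · have key : ∀ (n : ℕ) (v : β) (p : (G.corona H).Walk (Sum.inr (u, v)) z),
        p.length ≤ n → 1 + (G.corona H).edist (Sum.inl u) z ≤ p.length := by
      intro n
      induction n with
      | zero =>
        intro v p hp
        cases p with
        | nil => exact absurd rfl (hz v)
        | cons h q => simp at hp
      | succ n ih =>
        intro v p hp
        cases p with
        | nil => exact absurd rfl (hz v)
        | @cons _ y _ h q =>
          cases y with
          | inl w =>
            have hw : u = w := h
            subst hw
            have : (G.corona H).edist (Sum.inl u) z ≤ q.length :=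
              SimpleGraph.edist_le q
            simp only [SimpleGraph.Walk.length_cons]
            push_cast
            calc 1 + (G.corona H).edist (Sum.inl u) z ≤ 1 + (q.length : ℕ∞) := by gcongr
              _ = (q.length : ℕ∞) + 1 := by ring
          | inr p' =>
            obtain ⟨w, v''⟩ := p'
            have hw : u = w := h.1
            subst hw
            have hq : q.length ≤ n := by
              simpa using Nat.lt_succ_iff.mp (Nat.lt_of_lt_of_le (by simp) hp)
            calc 1 + (G.corona H).edist (Sum.inl u) z ≤ (q.length : ℕ∞) := ih v'' q hq
              _ ≤ ((SimpleGraph.Walk.cons h q).length : ℕ∞) := by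
                  push_cast [SimpleGraph.Walk.length_cons]; exact le_self_add
    rw [SimpleGraph.edist_eq_sInf]
    refine le_sInf ?_
    rintro _ ⟨p, rfl⟩
    exact key p.length v p le_rfl

/-- Distance inside one copy of `H`. -/
lemma aux_edist_same_copy (u : α) (v v' : β) [DecidableEq β] [DecidableRel H.Adj] :
    (G.corona H).edist (Sum.inr (u, v)) (Sum.inr (u, v')) =
      if v = v' then 0 else if H.Adj v v' then 1 else 2 := by
  split_ifs with h1 h2
  · subst h1; exact SimpleGraph.edist_self
  · exact SimpleGraph.edist_eq_one_iff_adj.mpr ⟨rfl, h2⟩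
  · have hne : (Sum.inr (u, v) : α ⊕ α × β) ≠ Sum.inr (u, v') := by simp [h1]
    refine le_antisymm ?_ ?_
    · refine le_trans (SimpleGraph.edist_le
        (SimpleGraph.Walk.cons (show (G.corona H).Adj (Sum.inr (u, v)) (Sum.inl u) from rfl)
          (SimpleGraph.Walk.cons (show (G.corona H).Adj (Sum.inl u) (Sum.inr (u, v')) from rfl)
            SimpleGraph.Walk.nil))) ?_
      norm_num [SimpleGraph.Walk.length_cons]
    · have h1e : 1 ≤ (G.corona H).edist (Sum.inr (u, v)) (Sum.inr (u, v')) :=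
        Order.one_le_iff_pos.mpr (SimpleGraph.edist_pos_of_ne hne)
      have h1lt : 1 < (G.corona H).edist (Sum.inr (u, v)) (Sum.inr (u, v')) := by
        refine lt_of_le_of_ne h1e fun he => h2 ?_
        exact (SimpleGraph.edist_eq_one_iff_adj.mp he.symm).2
      have : (1 : ℕ∞) + 1 ≤ (G.corona H).edist (Sum.inr (u, v)) (Sum.inr (u, v')) :=
        (ENat.add_one_le_iff (by simp)).mpr h1lt
      simpa [one_add_one_eq_two] using this

end AuxCorona

/-- In the corona product `G ⊙ H`, for `u ∈ V(G)` and distinct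
`v₁, v₂ ∈ V(H)`, `R_{G⊙H}{(u,v₁),(u,v₂)} = {(u,v) : v ∈ S_H{v₁,v₂}}`. -/
theorem stmt_4 {α β : Type*} [Fintype α] [Fintype β] [DecidableEq α] [DecidableEq β]
    (G : SimpleGraph α) (H : SimpleGraph β) [DecidableRel H.Adj]
    (hG : G.Connected) (hca : 2 ≤ Fintype.card α) (hcb : 2 ≤ Fintype.card β)
    (u : α) (v1 v2 : β) (hne : v1 ≠ v2) :
    resolvingFinset (G.corona H) (Sum.inr (u, v1)) (Sum.inr (u, v2)) =
      (locatingFinset H v1 v2).image fun v => Sum.inr (u, v) := by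
  ext z
  simp only [resolvingFinset, Finset.mem_filter, Finset.mem_univ, true_and, Finset.mem_image]
  cases z with
  | inl w =>
    constructor
    · intro h
      have heq2 : (G.corona H).edist (Sum.inr (u, v1)) (Sum.inl w) =
          (G.corona H).edist (Sum.inr (u, v2)) (Sum.inl w) := by
        rw [aux_edist_copy G H u _ (fun v' => by simp) v1,
          aux_edist_copy G H u _ (fun v' => by simp) v2]
      exact absurd heq2 h
    · rintro ⟨v, _, h⟩; cases h
  | inr p =>
    obtain ⟨w, v⟩ := p
    by_cases hw : u = w
    · subst hw
      rw [aux_edist_same_copy G H u v1 v, aux_edist_same_copy G H u v2 v]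
      have hmem : v ∈ locatingFinset H v1 v2 ↔
          v = v1 ∨ v = v2 ∨ ((H.Adj v1 v ∧ ¬H.Adj v2 v) ∨ (H.Adj v2 v ∧ ¬H.Adj v1 v)) := by
        simp [locatingFinset, Finset.mem_union, Finset.mem_insert, Finset.mem_singleton,
          Finset.mem_symmDiff, SimpleGraph.mem_neighborFinset, eq_comm, or_assoc]
      have hrhs : (∃ v' ∈ locatingFinset H v1 v2,
          (Sum.inr (u, v') : α ⊕ α × β) = Sum.inr (u, v)) ↔ v ∈ locatingFinset H v1 v2 := by
        constructor
        · rintro ⟨v', hv', heq⟩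
          obtain rfl : v' = v := by simpa using heq
          exact hv'
        · intro hv; exact ⟨v, hv, rfl⟩
      rw [hrhs, hmem]
      by_cases h1 : v1 = v <;> by_cases h2 : v2 = v <;>
        by_cases h3 : H.Adj v1 v <;> by_cases h4 : H.Adj v2 v <;>
        simp_all [eq_comm] <;> first | decide | tauto
    · constructor
      · intro h
        have hz : ∀ v' : β, (Sum.inr (w, v) : α ⊕ α × β) ≠ Sum.inr (u, v') := by
          intro v' hcon
          have h' : w = u ∧ v = v' := by simpa using hcon
          exact hw h'.1.symm
        have heq2 : (G.corona H).edist (Sum.inr (u, v1)) (Sum.inr (w, v)) =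
            (G.corona H).edist (Sum.inr (u, v2)) (Sum.inr (w, v)) := by
          rw [aux_edist_copy G H u _ hz v1, aux_edist_copy G H u _ hz v2]
        exact absurd heq2 h
      · rintro ⟨v', _, heq⟩
        have h' : u = w ∧ v' = v := by simpa using heq
        exact absurd h'.1 hw
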